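/- Let m \ge 2 and k \ge 1 be integers. Then \int_0^1 (\sin(\pi m t)/\sin(\pi t))^{2k} dt \le 2^{2k+1} m^{4k^2/(2k+1)}. -/

import Mathlib

open Real MeasureTheory Set

lemma abs_sin_nat_mul_le' (n : ℕ) (x : ℝ) : |Real.sin (n * x)| ≤ n * |Real.sin x| := by
  induction n with
  | zero => simp
  | succ n ih =>
    have h1 : ((n : ℝ) + 1) * x = n * x + x := by ring
    rw [Nat.cast_succ, h1, Real.sin_add]
    calc |Real.sin (n * x) * Real.cos x + Real.cos (n * x) * Real.sin x|
        ≤ |Real.sin (n * x) * Real.cos x| + |Real.cos (n * x) * Real.sin x| := abs_add_le _ _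
      _ ≤ |Real.sin (n * x)| * 1 + 1 * |Real.sin x| := by
          rw [abs_mul, abs_mul]
          gcongr
          · exact Real.abs_cos_le_one x
          · exact Real.abs_cos_le_one _
      _ ≤ (n : ℝ) * |Real.sin x| + 1 * |Real.sin x| := by
          have := ih
          nlinarith [abs_nonneg (Real.sin x)]
      _ = ((n : ℝ) + 1) * |Real.sin x| := by ring

lemma sin_pi_mul_ge {δ t : ℝ} (hδ : 0 < δ) (hδ2 : δ ≤ 1/2) (ht : t ∈ Set.Icc δ (1 - δ)) :
    2 * δ ≤ Real.sin (Real.pi * t) := by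
  obtain ⟨ht1, ht2⟩ := ht
  have hπ := Real.pi_pos
  rcases le_or_gt t (1/2) with h | h
  · have hs := Real.mul_le_sin (x := Real.pi * t) (by nlinarith) (by nlinarith)
    have : 2 / Real.pi * (Real.pi * t) = 2 * t := by
      field_simp
    rw [this] at hs
    linarith
  · have heq : Real.pi * t = Real.pi - Real.pi * (1 - t) := by ring
    rw [heq, Real.sin_pi_sub]
    have hs := Real.mul_le_sin (x := Real.pi * (1 - t)) (by nlinarith) (by nlinarith)
    have : 2 / Real.pi * (Real.pi * (1 - t)) = 2 * (1 - t) := by field_simp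
    rw [this] at hs
    linarith

theorem fejer_integral_upper_bound (m k : ℕ) (hm : 2 ≤ m) (hk : 1 ≤ k) :
    (∫ t in (0:ℝ)..1, (Real.sin (Real.pi * m * t) / Real.sin (Real.pi * t)) ^ (2 * k)) ≤
      2 ^ (2 * k + 1) * (m : ℝ) ^ ((4 * (k : ℝ) ^ 2) / (2 * k + 1)) := by
  set f : ℝ → ℝ := fun t => (Real.sin (Real.pi * m * t) / Real.sin (Real.pi * t)) ^ (2 * k) with hf
  have hm1 : (1:ℝ) < (m:ℝ) := by exact_mod_cast Nat.lt_of_lt_of_le one_lt_two hm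
  have hm0 : (0:ℝ) < (m:ℝ) := by linarith
  have hk1 : (1:ℝ) ≤ (k:ℝ) := by exact_mod_cast hk
  have hden : (0:ℝ) < 2 * (k:ℝ) + 1 := by linarith
  set M : ℝ := (m : ℝ) ^ ((4 * (k : ℝ) ^ 2) / (2 * k + 1)) with hM
  have hMpos : 0 < M := Real.rpow_pos_of_pos hm0 _
  set e : ℝ := 2 * (k:ℝ) / (2 * (k:ℝ) + 1) with he
  set δ : ℝ := (m : ℝ) ^ (-e) with hδdef
  have hδpos : 0 < δ := Real.rpow_pos_of_pos hm0 _
  -- pointwise abs bounds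
  have habs_m : ∀ t : ℝ, |Real.sin (Real.pi * m * t) / Real.sin (Real.pi * t)| ≤ (m:ℝ) := by
    intro t
    rcases eq_or_ne (Real.sin (Real.pi * t)) 0 with h | h
    · rw [h, div_zero, abs_zero]; linarith
    · rw [abs_div]
      rw [div_le_iff₀ (by positivity)]
      have : Real.pi * m * t = (m:ℝ) * (Real.pi * t) := by ring
      rw [this]
      exact abs_sin_nat_mul_le' m (Real.pi * t)
  have hf_nonneg : ∀ t, 0 ≤ f t := by
    intro t
    simp only [hf]
    rw [mul_comm 2 k, pow_mul]
    positivity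
  have hf_abs : ∀ t, f t = |Real.sin (Real.pi * m * t) / Real.sin (Real.pi * t)| ^ (2 * k) := by
    intro t
    simp only [hf]
    rw [(even_two_mul k).pow_abs]
  have hf_le_m : ∀ t, f t ≤ (m:ℝ) ^ (2 * k) := by
    intro t
    rw [hf_abs]
    exact pow_le_pow_left₀ (abs_nonneg _) (habs_m t) _
  -- integrability
  have hmeas : Measurable f := by
    apply Measurable.pow_const
    exact (Real.measurable_sin.comp (measurable_const.mul measurable_id)).div
      (Real.measurable_sin.comp (measurable_const.mul measurable_id))
  have hInt : ∀ a b : ℝ, a ∈ Set.Icc (0:ℝ) 1 → b ∈ Set.Icc (0:ℝ) 1 →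
      IntervalIntegrable f volume a b := by
    intro a b ha hb
    have h01 : IntervalIntegrable f volume 0 1 := by
      apply IntervalIntegrable.mono_fun (intervalIntegrable_const (c := (m:ℝ) ^ (2*k)))
        hmeas.aestronglyMeasurable
      filter_upwards with t
      rw [Real.norm_eq_abs, Real.norm_eq_abs, abs_of_nonneg (hf_nonneg t),
        abs_of_nonneg (by positivity)]
      exact hf_le_m t
    exact h01.mono_set (Set.uIcc_subset_uIcc (by simpa using ha) (by simpa using hb))
  -- rpow identities
  have hnatpow : ((m:ℝ)) ^ (2 * k) = (m:ℝ) ^ ((2 * (k:ℝ))) := by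
    rw [← Real.rpow_natCast (m:ℝ) (2*k)]
    norm_num
  have h0 : (2*(k:ℝ)+1) ≠ 0 := ne_of_gt hden
  have hδm : δ * (m:ℝ) ^ (2 * k) = M := by
    rw [hnatpow, hδdef, ← Real.rpow_add hm0, hM]
    congr 1
    rw [he, eq_div_iff h0]
    field_simp
    ring
  have hδinv : (δ⁻¹) ^ (2 * k) = M := by
    rw [hδdef, ← Real.rpow_neg_one, ← Real.rpow_natCast _ (2*k),
      ← Real.rpow_mul hm0.le, ← Real.rpow_mul hm0.le, hM]
    congr 1
    push_cast
    rw [he, eq_div_iff h0]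
    field_simp
    ring
  have h2pow : (3:ℝ) ≤ 2 ^ (2 * k + 1) := by
    calc (3:ℝ) ≤ 2 ^ 3 := by norm_num
    _ ≤ 2 ^ (2 * k + 1) := by
        apply pow_le_pow_right₀ one_le_two
        omega
  rcases le_or_gt δ (1/2) with hδhalf | hδhalf
  · -- main case: split the integral
    have hδ1 : δ ≤ 1 - δ := by linarith
    have hmem_δ : δ ∈ Set.Icc (0:ℝ) 1 := ⟨hδpos.le, by linarith⟩
    have hmem_δ' : (1 - δ) ∈ Set.Icc (0:ℝ) 1 := ⟨by linarith, by linarith⟩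
    have hmem0 : (0:ℝ) ∈ Set.Icc (0:ℝ) 1 := by norm_num
    have hmem1 : (1:ℝ) ∈ Set.Icc (0:ℝ) 1 := by norm_num
    have hsplit : (∫ t in (0:ℝ)..1, f t) =
        (∫ t in (0:ℝ)..δ, f t) + (∫ t in δ..(1-δ), f t) + (∫ t in (1-δ)..1, f t) := by
      rw [intervalIntegral.integral_add_adjacent_intervals
          (hInt 0 δ hmem0 hmem_δ) (hInt δ (1-δ) hmem_δ hmem_δ'),
        intervalIntegral.integral_add_adjacent_intervals
          (hInt 0 (1-δ) hmem0 hmem_δ') (hInt (1-δ) 1 hmem_δ' hmem1)]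
    -- piece 1
    have hp1 : (∫ t in (0:ℝ)..δ, f t) ≤ M := by
      calc (∫ t in (0:ℝ)..δ, f t) ≤ ∫ _ in (0:ℝ)..δ, (m:ℝ) ^ (2*k) :=
            intervalIntegral.integral_mono_on hδpos.le (hInt 0 δ hmem0 hmem_δ)
              intervalIntegrable_const (fun t _ => hf_le_m t)
        _ = δ * (m:ℝ) ^ (2*k) := by rw [intervalIntegral.integral_const]; simp
        _ = M := hδm
    -- piece 3
    have hp3 : (∫ t in (1-δ)..1, f t) ≤ M := by
      calc (∫ t in (1-δ)..1, f t) ≤ ∫ _ in (1-δ)..1, (m:ℝ) ^ (2*k) :=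
            intervalIntegral.integral_mono_on (by linarith) (hInt (1-δ) 1 hmem_δ' hmem1)
              intervalIntegrable_const (fun t _ => hf_le_m t)
        _ = δ * (m:ℝ) ^ (2*k) := by
            rw [intervalIntegral.integral_const, smul_eq_mul,
              show (1:ℝ) - (1 - δ) = δ by ring]
        _ = M := hδm
    -- piece 2
    have hp2 : (∫ t in δ..(1-δ), f t) ≤ M := by
      have hbnd : ∀ t ∈ Set.Icc δ (1-δ), f t ≤ ((2*δ)⁻¹) ^ (2*k) := by
        intro t ht
        rw [hf_abs]
        apply pow_le_pow_left₀ (abs_nonneg _)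
        have hsin := sin_pi_mul_ge hδpos hδhalf ht
        have hspos : 0 < Real.sin (Real.pi * t) := by linarith
        rw [abs_div]
        rw [div_le_iff₀ (by rw [abs_of_nonneg hspos.le]; exact hspos)]
        calc |Real.sin (Real.pi * m * t)| ≤ 1 := Real.abs_sin_le_one _
          _ = (2*δ)⁻¹ * (2*δ) := by field_simp
          _ ≤ (2*δ)⁻¹ * |Real.sin (Real.pi * t)| := by
              apply mul_le_mul_of_nonneg_left _ (by positivity)
              rw [abs_of_nonneg (by linarith)]
              exact hsin
      calc (∫ t in δ..(1-δ), f t) ≤ ∫ _ in δ..(1-δ), ((2*δ)⁻¹) ^ (2*k) :=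
            intervalIntegral.integral_mono_on hδ1 (hInt δ (1-δ) hmem_δ hmem_δ')
              intervalIntegrable_const hbnd
        _ = (1 - 2*δ) * ((2*δ)⁻¹) ^ (2*k) := by
            rw [intervalIntegral.integral_const, smul_eq_mul,
              show (1:ℝ) - δ - δ = 1 - 2*δ by ring]
        _ ≤ 1 * ((2*δ)⁻¹) ^ (2*k) := by
            apply mul_le_mul_of_nonneg_right (by linarith) (by positivity)
        _ ≤ 1 * (δ⁻¹) ^ (2*k) := by
            apply mul_le_mul_of_nonneg_left _ one_pos.le
            apply pow_le_pow_left₀ (by positivity)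
            rw [inv_le_inv₀ (by positivity) (by positivity)]
            linarith
        _ = M := by rw [one_mul, hδinv]
    calc (∫ t in (0:ℝ)..1, f t) ≤ M + M + M := by
          rw [hsplit]; gcongr
      _ = 3 * M := by ring
      _ ≤ 2 ^ (2*k+1) * M := by
          apply mul_le_mul_of_nonneg_right h2pow hMpos.le
  · -- easy case: m^e < 2, trivial bound m^(2k)
    have hme : (m:ℝ) ^ e < 2 := by
      have : (1:ℝ)/2 < (m:ℝ) ^ (-e) := hδhalf
      rw [Real.rpow_neg hm0.le] at this
      have hpos : 0 < (m:ℝ) ^ e := Real.rpow_pos_of_pos hm0 _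
      rw [lt_inv_comm₀ (by norm_num) hpos] at this
      · linarith [this]
    have htriv : (∫ t in (0:ℝ)..1, f t) ≤ (m:ℝ) ^ (2*k) := by
      calc (∫ t in (0:ℝ)..1, f t) ≤ ∫ _ in (0:ℝ)..1, (m:ℝ) ^ (2*k) :=
            intervalIntegral.integral_mono_on zero_le_one
              (hInt 0 1 (by norm_num) (by norm_num)) intervalIntegrable_const
              (fun t _ => hf_le_m t)
        _ = (m:ℝ) ^ (2*k) := by rw [intervalIntegral.integral_const]; simp
    have hsplit2 : (m:ℝ) ^ (2*k) = (m:ℝ) ^ e * M := by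
      rw [hnatpow, hM, ← Real.rpow_add hm0]
      congr 1
      rw [he]
      field_simp
      ring
    calc (∫ t in (0:ℝ)..1, f t) ≤ (m:ℝ) ^ (2*k) := htriv
      _ = (m:ℝ) ^ e * M := hsplit2
      _ ≤ 2 * M := mul_le_mul_of_nonneg_right hme.le hMpos.le
      _ ≤ 2 ^ (2*k+1) * M := by
          apply mul_le_mul_of_nonneg_right _ hMpos.le
          calc (2:ℝ) ≤ 3 := by norm_num
            _ ≤ _ := h2pow
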